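/- Let $F: \mathcal{U} \to \mathcal{V}$ be a complex box mapping satisfying the no permutation condition (for each component $U$ of $\mathcal{U}$ there exists $n\ge 0$ with $F^n(U)\setminus\mathcal{U}\neq\emptyset$). Then for any nested sequence of puzzle pieces $P_1 \supset P_2 \supset \dots$ (components of $F^{-n}(\mathcal{V})$ of increasing depth), the intersection $\bigcap_i P_i$ is compactly contained in $\mathcal{V}$; in particular each connected component of the non-escaping set $K(F) = \bigcap_{n\ge0} F^{-n}(\mathcal{V})$ is compact. -/

import Mathlib

open Set Topology Filter MeasureTheory

noncomputable section

structure ComplexBoxMapping : Type where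
  U : Set ℂ
  V : Set ℂ
  F : ℂ → ℂ
  isOpen_U : IsOpen U
  isOpen_V : IsOpen V
  subset_UV : U ⊆ V
  mapsTo : Set.MapsTo F U V
  holo : DifferentiableOn ℂ F U
  crit_finite : {z | z ∈ U ∧ deriv F z = 0}.Finite
  components_V_finite : {C | ∃ x ∈ V, C = connectedComponentIn V x}.Finite
  components_V_simplyConnected : ∀ x ∈ V, SimplyConnectedSpace (connectedComponentIn V x)
  components_V_disjoint_closures : ∀ x ∈ V, ∀ y ∈ V,
      connectedComponentIn V x ≠ connectedComponentIn V y →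
      closure (connectedComponentIn V x) ∩ closure (connectedComponentIn V y) = ∅
  components_U_simplyConnected : ∀ x ∈ U, SimplyConnectedSpace (connectedComponentIn U x)
  components_U : ∀ x ∈ U,
      connectedComponentIn U x = connectedComponentIn V x ∨
      (IsCompact (closure (connectedComponentIn U x)) ∧
        closure (connectedComponentIn U x) ⊆ connectedComponentIn V x)
  components_U_disjoint_closures : ∀ x ∈ U, ∀ y ∈ U,
      connectedComponentIn U x ≠ connectedComponentIn U y →
      closure (connectedComponentIn U x) ∩ closure (connectedComponentIn U y) = ∅
  maps_components : ∀ x ∈ U, F '' connectedComponentIn U x = connectedComponentIn V (F x)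
  proper_components : ∀ x ∈ U, ∀ K, K ⊆ connectedComponentIn V (F x) → IsCompact K →
      IsCompact (connectedComponentIn U x ∩ F ⁻¹' K)

namespace ComplexBoxMapping

/-- The set of points whose first `n` iterates remain in the domain and whose
`n`-th iterate lies in `V`; the puzzle pieces of depth `n` are its connected components. -/
def stays (B : ComplexBoxMapping) (n : ℕ) : Set ℂ :=
  {z | (∀ k < n, B.F^[k] z ∈ B.U) ∧ B.F^[n] z ∈ B.V}

/-- `P` is a puzzle piece of depth `n`: a connected component of `F^{-n}(V)`. -/
def IsPuzzlePiece (B : ComplexBoxMapping) (n : ℕ) (P : Set ℂ) : Prop :=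
  ∃ z ∈ B.stays n, P = connectedComponentIn (B.stays n) z

/-- The non-escaping (filled Julia) set `K(F)`. -/
def nonEscaping (B : ComplexBoxMapping) : Set ℂ := {z | ∀ n, B.F^[n] z ∈ B.U}

/-- The no permutation condition. -/
def NoPermutation (B : ComplexBoxMapping) : Prop :=
  ∀ x ∈ B.U, ∃ n, ¬ (B.F^[n] '' connectedComponentIn B.U x ⊆ B.U)

end ComplexBoxMapping

namespace ComplexBoxMapping

variable (B : ComplexBoxMapping)

lemma stays_zero : B.stays 0 = B.V := by
  ext z; simp [stays]

lemma stays_succ (n : ℕ) : B.stays (n + 1) = B.U ∩ B.F ⁻¹' (B.stays n) := by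
  ext z
  simp only [stays, mem_setOf_eq, mem_inter_iff, mem_preimage]
  constructor
  · rintro ⟨h1, h2⟩
    refine ⟨h1 0 n.succ_pos, fun k hk => ?_, ?_⟩
    · simpa [Function.iterate_succ_apply] using h1 (k + 1) (by omega)
    · simpa [Function.iterate_succ_apply] using h2
  · rintro ⟨h0, h1, h2⟩
    refine ⟨fun k hk => ?_, ?_⟩
    · cases k with
      | zero => exact h0
      | succ k => simpa [Function.iterate_succ_apply] using h1 k (by omega)
    · simpa [Function.iterate_succ_apply] using h2

lemma stays_succ_subset_U (n : ℕ) : B.stays (n + 1) ⊆ B.U := by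
  rw [stays_succ]; exact inter_subset_left

lemma stays_subset_V (n : ℕ) : B.stays n ⊆ B.V := by
  cases n with
  | zero => rw [stays_zero]
  | succ n => exact (B.stays_succ_subset_U n).trans B.subset_UV

lemma stays_succ_subset (n : ℕ) : B.stays (n + 1) ⊆ B.stays n := by
  induction n with
  | zero => exact (B.stays_succ_subset_U 0).trans (B.subset_UV.trans (B.stays_zero ▸ subset_rfl))
  | succ n ih =>
    rw [B.stays_succ (n + 1)]
    intro w hw
    rw [B.stays_succ]
    exact ⟨hw.1, ih hw.2⟩

lemma stays_antitone : Antitone B.stays :=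
  antitone_nat_of_succ_le fun n => B.stays_succ_subset n

lemma nonEscaping_subset_stays (n : ℕ) : B.nonEscaping ⊆ B.stays n :=
  fun z hz => ⟨fun k _ => hz k, B.subset_UV (hz n)⟩

lemma mem_U_of_stays {n k : ℕ} {z : ℂ} (hz : z ∈ B.stays n) (hk : k < n) :
    B.F^[k] z ∈ B.U := hz.1 k hk

/-- Case B: the component of `U` at `z` is a full component of `V`. -/
def CB (z : ℂ) : Prop := connectedComponentIn B.U z = connectedComponentIn B.V z

/-- Case A: the component of `U` at `z` is compactly contained in a component of `V`. -/
def CA (z : ℂ) : Prop :=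
  IsCompact (closure (connectedComponentIn B.U z)) ∧
    closure (connectedComponentIn B.U z) ⊆ connectedComponentIn B.V z

lemma CB_or_CA {z : ℂ} (hz : z ∈ B.U) : B.CB z ∨ B.CA z := B.components_U z hz

lemma piece_antitone {m n : ℕ} (h : m ≤ n) (z : ℂ) :
    connectedComponentIn (B.stays n) z ⊆ connectedComponentIn (B.stays m) z :=
  connectedComponentIn_mono z (B.stays_antitone h)

/-- Lemma A: if case B holds along the whole orbit, a puzzle piece is a component of `V`. -/
lemma pieceA : ∀ (n : ℕ) (z : ℂ), z ∈ B.stays n → (∀ k < n, B.CB (B.F^[k] z)) →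
    connectedComponentIn (B.stays n) z = connectedComponentIn B.V z := by
  intro n
  induction n with
  | zero => intro z _ _; rw [B.stays_zero]
  | succ n ih =>
    intro z hz hB
    have hz' := hz
    rw [B.stays_succ] at hz'
    obtain ⟨hzU, hFz⟩ := hz'
    have h0 : B.CB z := by simpa using hB 0 n.succ_pos
    have ihF : connectedComponentIn (B.stays n) (B.F z) = connectedComponentIn B.V (B.F z) :=
      ih (B.F z) hFz (fun k hk => by
        simpa [Function.iterate_succ_apply] using hB (k + 1) (by omega))
    have hVzU : connectedComponentIn B.V z ⊆ B.U := by
      rw [← h0]; exact connectedComponentIn_subset _ _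
    have him : B.F '' connectedComponentIn B.V z ⊆ B.stays n := by
      rw [← h0, B.maps_components z hzU, ← ihF]
      exact connectedComponentIn_subset _ _
    have hsub : connectedComponentIn B.V z ⊆ B.stays (n + 1) := by
      rw [B.stays_succ]
      intro w hw
      exact ⟨hVzU hw, him (mem_image_of_mem _ hw)⟩
    have hzV : z ∈ B.V := B.stays_subset_V _ hz
    apply Subset.antisymm
    · exact (isPreconnected_connectedComponentIn).subset_connectedComponentIn
        (mem_connectedComponentIn hz) ((connectedComponentIn_subset _ _).trans (B.stays_subset_V _))
    · exact (isPreconnected_connectedComponentIn).subset_connectedComponentIn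
        (mem_connectedComponentIn hzV) hsub

/-- The inductive step: if the image piece is nicely contained, pull back by properness. -/
lemma pieceB2 {n : ℕ} {z : ℂ} (hz : z ∈ B.stays (n + 1))
    (hK : IsCompact (closure (connectedComponentIn (B.stays n) (B.F z))))
    (hKV : closure (connectedComponentIn (B.stays n) (B.F z)) ⊆ B.V) :
    IsCompact (closure (connectedComponentIn (B.stays (n + 1)) z)) ∧
      closure (connectedComponentIn (B.stays (n + 1)) z) ⊆
        connectedComponentIn B.U z ∩ B.F ⁻¹' (closure (connectedComponentIn (B.stays n) (B.F z))) := by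
  have hz' := hz
  rw [B.stays_succ] at hz'
  obtain ⟨hzU, hFz⟩ := hz'
  set K := closure (connectedComponentIn (B.stays n) (B.F z)) with hKdef
  have hKconn : IsPreconnected K := (isPreconnected_connectedComponentIn).closure
  have hFzK : B.F z ∈ K := subset_closure (mem_connectedComponentIn hFz)
  have hKsub : K ⊆ connectedComponentIn B.V (B.F z) :=
    hKconn.subset_connectedComponentIn hFzK hKV
  have hM : IsCompact (connectedComponentIn B.U z ∩ B.F ⁻¹' K) :=
    B.proper_components z hzU K hKsub hK
  have hPU : connectedComponentIn (B.stays (n + 1)) z ⊆ connectedComponentIn B.U z :=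
    (isPreconnected_connectedComponentIn).subset_connectedComponentIn
      (mem_connectedComponentIn hz) ((connectedComponentIn_subset _ _).trans (B.stays_succ_subset_U n))
  have hPstays : connectedComponentIn (B.stays (n + 1)) z ⊆ B.stays (n + 1) :=
    connectedComponentIn_subset _ _
  have himage : B.F '' connectedComponentIn (B.stays (n + 1)) z ⊆ K := by
    have hconn : IsPreconnected (B.F '' connectedComponentIn (B.stays (n + 1)) z) :=
      (isPreconnected_connectedComponentIn).image _
        (B.holo.continuousOn.mono (hPU.trans (connectedComponentIn_subset _ _)))
    have hsubst : B.F '' connectedComponentIn (B.stays (n + 1)) z ⊆ B.stays n := by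
      rintro w ⟨u, hu, rfl⟩
      have := hPstays hu
      rw [B.stays_succ] at this
      exact this.2
    have := hconn.subset_connectedComponentIn
      (mem_image_of_mem _ (mem_connectedComponentIn hz)) hsubst
    exact this.trans subset_closure
  have hPM : connectedComponentIn (B.stays (n + 1)) z ⊆
      connectedComponentIn B.U z ∩ B.F ⁻¹' K := fun w hw =>
    ⟨hPU hw, himage (mem_image_of_mem _ hw)⟩
  have hclP : closure (connectedComponentIn (B.stays (n + 1)) z) ⊆
      connectedComponentIn B.U z ∩ B.F ⁻¹' K :=
    closure_minimal hPM hM.isClosed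
  exact ⟨hM.of_isClosed_subset isClosed_closure hclP, hclP⟩

/-- Lemma B: if case A holds somewhere along the first `n` steps of the orbit,
the puzzle piece of depth `n` is compactly contained in `V`. -/
lemma pieceB : ∀ (n : ℕ) (z : ℂ), z ∈ B.stays n → (∃ k < n, B.CA (B.F^[k] z)) →
    IsCompact (closure (connectedComponentIn (B.stays n) z)) ∧
      closure (connectedComponentIn (B.stays n) z) ⊆ B.V := by
  intro n
  induction n with
  | zero => rintro z _ ⟨k, hk, _⟩; omega
  | succ n ih =>
    rintro z hz ⟨k, hk, hCA⟩
    cases k with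
    | zero =>
      simp only [Function.iterate_zero, id_eq] at hCA
      have hPU : connectedComponentIn (B.stays (n + 1)) z ⊆ connectedComponentIn B.U z :=
        (isPreconnected_connectedComponentIn).subset_connectedComponentIn
          (mem_connectedComponentIn hz)
          ((connectedComponentIn_subset _ _).trans (B.stays_succ_subset_U n))
      have hcl : closure (connectedComponentIn (B.stays (n + 1)) z) ⊆
          closure (connectedComponentIn B.U z) := closure_mono hPU
      exact ⟨hCA.1.of_isClosed_subset isClosed_closure hcl,
        hcl.trans (hCA.2.trans (connectedComponentIn_subset _ _))⟩
    | succ k =>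
      have hz' := hz
      rw [B.stays_succ] at hz'
      obtain ⟨hzU, hFz⟩ := hz'
      have hCA' : B.CA (B.F^[k] (B.F z)) := by
        rwa [Function.iterate_succ_apply] at hCA
      obtain ⟨h1, h2⟩ := ih (B.F z) hFz ⟨k, by omega, hCA'⟩
      obtain ⟨hc, hsub⟩ := B.pieceB2 hz h1 h2
      exact ⟨hc, hsub.trans ((inter_subset_left).trans
        ((connectedComponentIn_subset _ _).trans B.subset_UV))⟩

/-- Consequence of the no-permutation condition: case B can't hold along an entire orbit. -/
lemma no_perm_aux (hnp : B.NoPermutation) (x : ℂ) (hx : ∀ k, B.F^[k] x ∈ B.U)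
    (hCB : ∀ k, B.CB (B.F^[k] x)) : False := by
  have key : ∀ m, B.F^[m] '' connectedComponentIn B.U x =
      connectedComponentIn B.V (B.F^[m] x) := by
    intro m
    induction m with
    | zero => simpa [CB] using hCB 0
    | succ m ih =>
      have hCBm : connectedComponentIn B.U (B.F^[m] x) = connectedComponentIn B.V (B.F^[m] x) :=
        hCB m
      rw [Function.iterate_succ', Set.image_comp, ih, ← hCBm,
        B.maps_components _ (hx m)]
      rfl
  obtain ⟨n, hn⟩ := hnp x (by simpa using hx 0)
  apply hn
  rw [key n, ← hCB n]
  exact connectedComponentIn_subset _ _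

/-- Every non-escaping point has case A somewhere along its orbit. -/
lemma exists_CA (hnp : B.NoPermutation) (y : ℂ) (hy : ∀ k, B.F^[k] y ∈ B.U) :
    ∃ k, B.CA (B.F^[k] y) := by
  by_contra h
  push_neg at h
  exact B.no_perm_aux hnp y hy (fun k => (B.CB_or_CA (hy k)).resolve_right (h k))

end ComplexBoxMapping

/-- For a complex box mapping satisfying the no permutation condition, the intersection of
any nested sequence of puzzle pieces of increasing depth is compactly contained in `𝒱`;
in particular each connected component of the non-escaping set `K(F)` is compact. -/
theorem stmt_2 (B : ComplexBoxMapping) (hnp : B.NoPermutation)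
    (P : ℕ → Set ℂ) (d : ℕ → ℕ) (hd : StrictMono d)
    (hP : ∀ i, B.IsPuzzlePiece (d i) (P i))
    (hnest : ∀ i, P (i + 1) ⊆ P i) :
    (IsCompact (closure (⋂ i, P i)) ∧ closure (⋂ i, P i) ⊆ B.V) ∧
    ∀ x ∈ B.nonEscaping, IsCompact (connectedComponentIn B.nonEscaping x) := by
  constructor
  · -- Part 1: the nested intersection is compactly contained in V.
    by_cases h : ∃ i, IsCompact (closure (P i)) ∧ closure (P i) ⊆ B.V
    · obtain ⟨i, hc, hv⟩ := h
      have hsub : closure (⋂ j, P j) ⊆ closure (P i) := closure_mono (iInter_subset _ i)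
      exact ⟨hc.of_isClosed_subset isClosed_closure hsub, hsub.trans hv⟩
    · exfalso
      have hng : ∀ i, ¬ (IsCompact (closure (P i)) ∧ closure (P i) ⊆ B.V) :=
        fun i hi => h ⟨i, hi⟩
      have hP' : ∀ i, ∃ z, z ∈ B.stays (d i) ∧ P i = connectedComponentIn (B.stays (d i)) z :=
        fun i => hP i
      choose z hzs hPeq using hP'
      have hzPi : ∀ i, z i ∈ P i := fun i => by
        rw [hPeq i]; exact mem_connectedComponentIn (hzs i)
      have hCBi : ∀ i, ∀ w, w ∈ P i → ∀ k < d i, B.CB (B.F^[k] w) := by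
        intro i w hw k hk
        have hw0 : w ∈ connectedComponentIn (B.stays (d i)) (z i) := by rwa [hPeq i] at hw
        have hw1 : w ∈ B.stays (d i) := connectedComponentIn_subset _ _ hw0
        have heq : connectedComponentIn (B.stays (d i)) w = P i := by
          rw [hPeq i]; exact (connectedComponentIn_eq hw0).symm
        rcases B.CB_or_CA (hw1.1 k hk) with hB | hA
        · exact hB
        · exact absurd (heq ▸ B.pieceB (d i) w hw1 ⟨k, hk, hA⟩) (hng i)
      have hPV : ∀ i, P i = connectedComponentIn B.V (z i) := by
        intro i
        rw [hPeq i]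
        exact B.pieceA _ _ (hzs i) (fun k hk => hCBi i (z i) (hzPi i) k hk)
      have hPsucc : ∀ i, P (i + 1) = P i := by
        intro i
        have hmem : z (i + 1) ∈ connectedComponentIn B.V (z i) := by
          rw [← hPV i]; exact hnest i (hzPi (i + 1))
        rw [hPV (i + 1), hPV i]
        exact (connectedComponentIn_eq hmem).symm
      have hPall : ∀ i, P i = P 0 := by
        intro i
        induction i with
        | zero => rfl
        | succ i ih => rw [hPsucc i, ih]
      have hz0 : ∀ i, z 0 ∈ P i := fun i => by rw [hPall i]; exact hzPi 0
      have hz0s : ∀ n, z 0 ∈ B.stays n := by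
        intro n
        have h1 : z 0 ∈ B.stays (d n) := by
          have := hz0 n
          rw [hPeq n] at this
          exact connectedComponentIn_subset _ _ this
        exact B.stays_antitone hd.le_apply h1
      have hxU : ∀ k, B.F^[k] (z 0) ∈ B.U := fun k => (hz0s (k + 1)).1 k (Nat.lt_succ_self k)
      have hCBall : ∀ k, B.CB (B.F^[k] (z 0)) := fun k =>
        hCBi (k + 1) (z 0) (hz0 (k + 1)) k (lt_of_lt_of_le (Nat.lt_succ_self k) hd.le_apply)
      exact B.no_perm_aux hnp (z 0) hxU hCBall
  · -- Part 2: components of the non-escaping set are compact.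
    intro x hx
    have hxU : ∀ k, B.F^[k] x ∈ B.U := hx
    have hyU : ∀ j k, B.F^[k] (B.F^[j] x) ∈ B.U := fun j k => by
      rw [← Function.iterate_add_apply]; exact hxU (k + j)
    have hystays : ∀ j n, B.F^[j] x ∈ B.stays n :=
      fun j n => ⟨fun k _ => hyU j k, B.subset_UV (hyU j n)⟩
    choose kk hkk using fun j => B.exists_CA hnp (B.F^[j] x) (hyU j)
    have hgood : ∀ j n, kk j < n →
        IsCompact (closure (connectedComponentIn (B.stays n) (B.F^[j] x))) ∧
          closure (connectedComponentIn (B.stays n) (B.F^[j] x)) ⊆ B.V :=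
      fun j n hn => B.pieceB n _ (hystays j n) ⟨kk j, hn, hkk j⟩
    have hchain : ∀ j n, kk (j + 1) < n →
        closure (connectedComponentIn (B.stays (n + 1)) (B.F^[j] x)) ⊆
          connectedComponentIn B.U (B.F^[j] x) ∩
            B.F ⁻¹' (closure (connectedComponentIn (B.stays n) (B.F^[j + 1] x))) := by
      intro j n hn
      have hFy : B.F (B.F^[j] x) = B.F^[j + 1] x := (Function.iterate_succ_apply' B.F j x).symm
      have hg := hgood (j + 1) n hn
      have h2 := B.pieceB2 (n := n) (z := B.F^[j] x) (hystays j (n + 1))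
        (by rw [hFy]; exact hg.1) (by rw [hFy]; exact hg.2)
      rw [hFy] at h2
      exact h2.2
    set T : ℕ → Set ℂ :=
      fun j => ⋂ n, closure (connectedComponentIn (B.stays n) (B.F^[j] x)) with hT
    have hTU : ∀ j, T j ⊆ B.U := by
      intro j
      refine (iInter_subset _ (kk (j + 1) + 1 + 1)).trans ?_
      refine (hchain j (kk (j + 1) + 1) (Nat.lt_succ_self _)).trans ?_
      exact inter_subset_left.trans (connectedComponentIn_subset _ _)
    have hTF : ∀ j w, w ∈ T j → B.F w ∈ T (j + 1) := by
      intro j w hw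
      refine mem_iInter.2 fun n => ?_
      set N := max n (kk (j + 1) + 1) with hN
      have h1 : w ∈ closure (connectedComponentIn (B.stays (N + 1)) (B.F^[j] x)) :=
        mem_iInter.1 hw (N + 1)
      have h2 := hchain j N (lt_of_lt_of_le (Nat.lt_succ_self _) (le_max_right _ _))
      have h3 : B.F w ∈ closure (connectedComponentIn (B.stays N) (B.F^[j + 1] x)) :=
        (h2 h1).2
      exact closure_mono (B.piece_antitone (le_max_left n _) _) h3
    have hiter : ∀ w ∈ T 0, ∀ j, B.F^[j] w ∈ T j := by
      intro w hw j
      induction j with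
      | zero => simpa using hw
      | succ j ih =>
        rw [Function.iterate_succ_apply']
        exact hTF j _ ih
    have hTne : T 0 ⊆ B.nonEscaping := fun w hw j => hTU j (hiter w hw j)
    have hCsub : ∀ n, connectedComponentIn B.nonEscaping x ⊆
        connectedComponentIn (B.stays n) x := fun n =>
      (isPreconnected_connectedComponentIn).subset_connectedComponentIn
        (mem_connectedComponentIn hx)
        ((connectedComponentIn_subset _ _).trans (B.nonEscaping_subset_stays n))
    have hclT : closure (connectedComponentIn B.nonEscaping x) ⊆ T 0 := by
      refine subset_iInter fun n => closure_mono ?_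
      simpa using hCsub n
    have hclNE : closure (connectedComponentIn B.nonEscaping x) ⊆ B.nonEscaping :=
      hclT.trans hTne
    have hclC : closure (connectedComponentIn B.nonEscaping x) ⊆
        connectedComponentIn B.nonEscaping x :=
      (isPreconnected_connectedComponentIn.closure).subset_connectedComponentIn
        (subset_closure (mem_connectedComponentIn hx)) hclNE
    have hclosed : IsClosed (connectedComponentIn B.nonEscaping x) :=
      isClosed_of_closure_subset hclC
    have hcomp := (hgood 0 (kk 0 + 1) (Nat.lt_succ_self _)).1
    have hsub : connectedComponentIn B.nonEscaping x ⊆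
        closure (connectedComponentIn (B.stays (kk 0 + 1)) (B.F^[0] x)) := by
      simpa using (hCsub (kk 0 + 1)).trans subset_closure
    exact hcomp.of_isClosed_subset hclosed hsub
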